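/- arXiv:2209.12241 — 5 statements merged into one kernel-verified Lean document; each statement's English description precedes it below -/
import Mathlib

section
/- Let E be a real inner product space and a, b ∈ E. Suppose γ* ∈ [0,1] satisfies ‖γ*·a + (1−γ*)·b‖ ≤ ‖γ·a + (1−γ)·b‖ for all γ ∈ [0,1], and set d = γ*·a + (1−γ*)·b. Then ⟨a, d⟩ ≥ ‖d‖² and ⟨b, d⟩ ≥ ‖d‖² (the KKT consequence underlying MGDA: the min-norm point is a weighted descent direction for both objectives). -/
open scoped RealInnerProductSpace

/-- KKT consequence underlying MGDA: if `γ* ∈ [0,1]` minimizes `γ ↦ ‖γ•a + (1-γ)•b‖`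
over `[0,1]` and `d = γ*•a + (1-γ*)•b`, then `⟪a, d⟫ ≥ ‖d‖²` and `⟪b, d⟫ ≥ ‖d‖²`. -/
theorem stmt_6 {E : Type*} [NormedAddCommGroup E] [InnerProductSpace ℝ E] (a b : E)
    (γs : ℝ) (hγs : γs ∈ Set.Icc (0 : ℝ) 1)
    (hmin : ∀ γ ∈ Set.Icc (0 : ℝ) 1, ‖γs • a + (1 - γs) • b‖ ≤ ‖γ • a + (1 - γ) • b‖)
    (d : E) (hd : d = γs • a + (1 - γs) • b) :
    ‖d‖ ^ 2 ≤ ⟪a, d⟫ ∧ ‖d‖ ^ 2 ≤ ⟪b, d⟫ := by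
  obtain ⟨h0, h1⟩ := hγs
  set c : ℝ := ⟪a - b, d⟫ with hc
  set n : ℝ := ‖a - b‖ ^ 2 with hn
  have hn0 : 0 ≤ n := by positivity
  -- Key inequality from minimality
  have key : ∀ t : ℝ, γs + t ∈ Set.Icc (0 : ℝ) 1 → 0 ≤ 2 * t * c + t ^ 2 * n := by
    intro t ht
    have h := hmin (γs + t) ht
    have heq : (γs + t) • a + (1 - (γs + t)) • b = d + t • (a - b) := by
      rw [hd]; module
    rw [heq, ← hd] at h
    have hsq : ‖d‖ ^ 2 ≤ ‖d + t • (a - b)‖ ^ 2 := by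
      apply pow_le_pow_left₀ (norm_nonneg _) h _
    rw [norm_add_sq_real] at hsq
    have hi : ⟪d, t • (a - b)⟫ = t * c := by
      rw [real_inner_smul_right, hc, real_inner_comm]
    have hns : ‖t • (a - b)‖ ^ 2 = t ^ 2 * n := by
      rw [norm_smul, mul_pow, hn]
      simp [sq_abs]
    rw [hi, hns] at hsq
    linarith
  -- If a = b, c = 0
  have hc_zero : n = 0 → c = 0 := by
    intro h
    have : a - b = 0 := by
      have := (pow_eq_zero_iff (n := 2) (by norm_num)).mp h
      exact norm_eq_zero.mp this
    rw [hc, this, inner_zero_left]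
  -- Claim 1 : 0 ≤ (1 - γs) * c
  have claim1 : 0 ≤ (1 - γs) * c := by
    rcases eq_or_lt_of_le h1 with h | h
    · rw [← h]; ring_nf; exact le_refl 0
    by_contra hcon
    push_neg at hcon
    have hcneg : c < 0 := by nlinarith
    rcases eq_or_lt_of_le hn0 with hn' | hn'
    · have := hc_zero hn'.symm; linarith
    set t := min (1 - γs) (-c / n) with htdef
    have ht0 : 0 < t := lt_min (by linarith) (div_pos (by linarith) hn')
    have ht1 : t ≤ 1 - γs := min_le_left _ _
    have ht2 : t ≤ -c / n := min_le_right _ _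
    have hk := key t ⟨by linarith, by linarith⟩
    have htn : t * n ≤ -c := (le_div_iff₀ hn').mp ht2
    nlinarith
  -- Claim 2 : γs * c ≤ 0
  have claim2 : γs * c ≤ 0 := by
    rcases eq_or_lt_of_le h0 with h | h
    · rw [← h]; ring_nf; exact le_refl 0
    by_contra hcon
    push_neg at hcon
    have hcpos : 0 < c := by nlinarith
    rcases eq_or_lt_of_le hn0 with hn' | hn'
    · have := hc_zero hn'.symm; linarith
    set t := min γs (c / n) with htdef
    have ht0 : 0 < t := lt_min h (by positivity)
    have ht1 : t ≤ γs := min_le_left _ _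
    have ht2 : t ≤ c / n := min_le_right _ _
    have hk := key (-t) ⟨by linarith, by linarith⟩
    have htn : t * n ≤ c := (le_div_iff₀ hn').mp ht2
    nlinarith
  constructor
  · have : ⟪a, d⟫ - ‖d‖ ^ 2 = (1 - γs) * c := by
      rw [← real_inner_self_eq_norm_sq]
      have : a - d = (1 - γs) • (a - b) := by rw [hd]; module
      calc ⟪a, d⟫ - ⟪d, d⟫ = ⟪a - d, d⟫ := by rw [inner_sub_left]
        _ = (1 - γs) * c := by rw [this, real_inner_smul_left, hc]
    linarith
  · have : ⟪b, d⟫ - ‖d‖ ^ 2 = -(γs * c) := by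
      rw [← real_inner_self_eq_norm_sq]
      have : b - d = (-γs) • (a - b) := by rw [hd]; module
      calc ⟪b, d⟫ - ⟪d, d⟫ = ⟪b - d, d⟫ := by rw [inner_sub_left]
        _ = -(γs * c) := by rw [this, real_inner_smul_left, hc]; ring
    linarith
end

section
/- Let E be a real inner product space and a, b ∈ E. Suppose γ* ∈ [0,1] satisfies ‖γ*·a + (1−γ*)·b‖ ≤ ‖γ·a + (1−γ)·b‖ for all γ ∈ [0,1], and set d = γ*·a + (1−γ*)·b. If d ≠ 0, then ⟨a, d⟩ > 0 and ⟨b, d⟩ > 0; i.e., −d is a strict common descent direction for both the Stability and the Plasticity objective. -/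
open scoped RealInnerProductSpace

lemma aux_small_t (s K : ℝ) (hK : 0 ≤ K)
    (h : ∀ t ∈ Set.Ioc (0:ℝ) 1, 0 ≤ 2*s + t*K) : 0 ≤ s := by
  by_contra hs
  push_neg at hs
  have hK1 : 0 < K + 1 := by linarith
  set t := min 1 (-s/(K+1)) with ht
  have ht0 : 0 < t := lt_min one_pos (div_pos (by linarith) hK1)
  have ht1 : t ≤ 1 := min_le_left _ _
  have h2 := h t ⟨ht0, ht1⟩
  have htle : t ≤ -s/(K+1) := min_le_right _ _
  have h3 : t * K ≤ (-s/(K+1)) * K := mul_le_mul_of_nonneg_right htle hK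
  have h4 : (-s/(K+1)) * K ≤ -s := by
    rw [div_mul_eq_mul_div, div_le_iff₀ hK1]
    nlinarith
  linarith

/-- If `γ* ∈ [0,1]` minimizes `γ ↦ ‖γ•a + (1-γ)•b‖` over `[0,1]`,
`d = γ*•a + (1-γ*)•b`, and `d ≠ 0`, then `⟪a, d⟫ > 0` and `⟪b, d⟫ > 0`:
`-d` is a strict common descent direction for both objectives. -/
theorem stmt_7 {E : Type*} [NormedAddCommGroup E] [InnerProductSpace ℝ E] (a b : E)
    (γs : ℝ) (hγs : γs ∈ Set.Icc (0 : ℝ) 1)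
    (hmin : ∀ γ ∈ Set.Icc (0 : ℝ) 1, ‖γs • a + (1 - γs) • b‖ ≤ ‖γ • a + (1 - γ) • b‖)
    (d : E) (hd : d = γs • a + (1 - γs) • b) (hne : d ≠ 0) :
    0 < ⟪a, d⟫ ∧ 0 < ⟪b, d⟫ := by
  obtain ⟨hγ0, hγ1⟩ := hγs
  have hdn : 0 < ‖d‖ := norm_pos_iff.mpr hne
  have hd2 : (0:ℝ) < ‖d‖^2 := by positivity
  set v := a - b with hv
  set c := ⟪v, d⟫ with hc
  -- key variational inequality
  have key : ∀ t : ℝ, γs + t ∈ Set.Icc (0:ℝ) 1 → 0 ≤ 2*(t*c) + t^2*‖v‖^2 := by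
    intro t ht
    have h1 := hmin (γs + t) ht
    have he : (γs + t) • a + (1 - (γs + t)) • b = d + t • v := by
      rw [hd, hv]; module
    rw [he, ← hd] at h1
    have h2 : ‖d‖^2 ≤ ‖d + t • v‖^2 := by
      have := pow_le_pow_left₀ (norm_nonneg _) h1 2
      simpa using this
    rw [norm_add_sq_real] at h2
    have hi : ⟪d, t • v⟫ = t * c := by
      rw [real_inner_smul_right, hc, real_inner_comm]
    have hn : ‖t • v‖^2 = t^2 * ‖v‖^2 := by
      rw [norm_smul, mul_pow]; simp [sq_abs]
    rw [hi, hn] at h2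
    linarith
  -- first claim : 0 ≤ (1 - γs) * c
  have claim1 : 0 ≤ (1 - γs) * c := by
    apply aux_small_t _ ((1-γs)^2 * ‖v‖^2) (by positivity)
    intro t' ht'
    obtain ⟨ht0, ht1⟩ := ht'
    have hmem : γs + t' * (1 - γs) ∈ Set.Icc (0:ℝ) 1 := by
      constructor <;> nlinarith
    have hk := key (t' * (1 - γs)) hmem
    by_contra hcon
    push_neg at hcon
    nlinarith
  -- second claim : 0 ≤ -(γs * c)
  have claim2 : 0 ≤ -(γs * c) := by
    apply aux_small_t _ (γs^2 * ‖v‖^2) (by positivity)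
    intro t' ht'
    obtain ⟨ht0, ht1⟩ := ht'
    have hmem : γs + (-(t' * γs)) ∈ Set.Icc (0:ℝ) 1 := by
      constructor <;> nlinarith
    have hk := key (-(t' * γs)) hmem
    by_contra hcon
    push_neg at hcon
    nlinarith
  -- conclude
  have ha : a = d + (1 - γs) • v := by rw [hd, hv]; module
  have hb : b = d + (-γs) • v := by rw [hd, hv]; module
  have had : ⟪a, d⟫ = ‖d‖^2 + (1 - γs) * c := by
    rw [ha, inner_add_left, real_inner_smul_left, real_inner_self_eq_norm_sq, hc]
  have hbd : ⟪b, d⟫ = ‖d‖^2 + (-γs) * c := by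
    rw [hb, inner_add_left, real_inner_smul_left, real_inner_self_eq_norm_sq, hc]
  constructor
  · rw [had]; linarith
  · rw [hbd]; linarith
end

section
/- (Strong duality / primal optimality for the steepest-gradient problem.) Let E be a real inner product space and g₁, g₂ ∈ E. Suppose γ* ∈ [0,1] satisfies ‖γ*·g₁ + (1−γ*)·g₂‖ ≤ ‖γ·g₁ + (1−γ)·g₂‖ for all γ ∈ [0,1], and set g = γ*·g₁ + (1−γ*)·g₂, d* = −g, α* = −‖g‖². Then (d*, α*) is primal feasible (⟨g₁, d*⟩ ≤ α* and ⟨g₂, d*⟩ ≤ α*), and for every d ∈ E, α ∈ ℝ with ⟨g₁, d⟩ ≤ α and ⟨g₂, d⟩ ≤ α we have α* + (1/2)‖d*‖² ≤ α + (1/2)‖d‖²; i.e., (d*, α*) is an optimal solution of the primal problem, with optimal value −(1/2)‖g‖². -/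
open scoped RealInnerProductSpace

/-- Strong duality / primal optimality for the steepest-gradient problem: if
`γ* ∈ [0,1]` solves the MGDA min-norm problem and `g = γ*•g₁ + (1-γ*)•g₂`,
then `(d*, α*) = (-g, -‖g‖²)` is primal feasible and optimal, with value `-(1/2)‖g‖²`. -/
theorem stmt_11 {E : Type*} [NormedAddCommGroup E] [InnerProductSpace ℝ E] (g₁ g₂ : E)
    (γs : ℝ) (hγs : γs ∈ Set.Icc (0 : ℝ) 1)
    (hmin : ∀ γ ∈ Set.Icc (0 : ℝ) 1, ‖γs • g₁ + (1 - γs) • g₂‖ ≤ ‖γ • g₁ + (1 - γ) • g₂‖)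
    (g ds : E) (αs : ℝ) (hg : g = γs • g₁ + (1 - γs) • g₂) (hds : ds = -g)
    (hαs : αs = -‖g‖ ^ 2) :
    (⟪g₁, ds⟫ ≤ αs ∧ ⟪g₂, ds⟫ ≤ αs) ∧
      (∀ (d : E) (α : ℝ), ⟪g₁, d⟫ ≤ α → ⟪g₂, d⟫ ≤ α →
        αs + (1 / 2) * ‖ds‖ ^ 2 ≤ α + (1 / 2) * ‖d‖ ^ 2) ∧
      αs + (1 / 2) * ‖ds‖ ^ 2 = -(1 / 2) * ‖g‖ ^ 2 := by
  obtain ⟨h0, h1⟩ := hγs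
  set v : E := g₁ - g₂ with hv
  set c : ℝ := ⟪v, g⟫ with hc
  set K : ℝ := ‖v‖ ^ 2 with hK
  -- quadratic inequality from optimality
  have hq : ∀ t : ℝ, -γs ≤ t → t ≤ 1 - γs → 0 ≤ 2 * t * c + t ^ 2 * K := by
    intro t ht1 ht2
    have hγmem : t + γs ∈ Set.Icc (0 : ℝ) 1 := ⟨by linarith, by linarith⟩
    have := hmin (t + γs) hγmem
    have hgt : (t + γs) • g₁ + (1 - (t + γs)) • g₂ = g + t • v := by
      rw [hg, hv]; module
    rw [← hg, hgt] at this
    have hsq : ‖g‖ ^ 2 ≤ ‖g + t • v‖ ^ 2 := by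
      have := pow_le_pow_left₀ (norm_nonneg g) this 2
      linarith
    have hexp : ‖g + t • v‖ ^ 2 = ‖g‖ ^ 2 + 2 * (t * c) + t ^ 2 * K := by
      rw [norm_add_sq_real, real_inner_smul_right, norm_smul, mul_pow, hc, hK,
        real_inner_comm]
      simp [abs_sq, sq_abs]
    nlinarith [hsq]
  -- if K = 0 then v = 0 and c = 0
  have hKc : K = 0 → c = 0 := by
    intro h
    have : v = 0 := by
      have : ‖v‖ = 0 := by nlinarith [norm_nonneg v, sq_nonneg ‖v‖]
      simpa using this
    simp [hc, this]
  have hKnn : 0 ≤ K := sq_nonneg _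
  -- key: (1-γs) * c ≥ 0
  have key1 : 0 ≤ (1 - γs) * c := by
    rcases eq_or_lt_of_le h1 with h | h
    · simp [← h]
    · have : 0 ≤ c := by
        by_contra hcneg
        push_neg at hcneg
        have hK0 : 0 < K := by
          rcases lt_or_eq_of_le hKnn with h' | h'
          · exact h'
          · exact absurd (hKc h'.symm) (by linarith)
        set t := min (1 - γs) (-c / K) with htdef
        have ht0 : 0 < t := lt_min (by linarith) (div_pos (by linarith) hK0)
        have htK : t * K ≤ -c := by
          have : t ≤ -c / K := min_le_right _ _
          calc t * K ≤ (-c / K) * K := by nlinarith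
            _ = -c := by field_simp
        have := hq t (by linarith) (min_le_left _ _)
        nlinarith
      nlinarith
  -- key: γs * c ≤ 0
  have key2 : γs * c ≤ 0 := by
    rcases eq_or_lt_of_le h0 with h | h
    · simp [← h]
    · have : c ≤ 0 := by
        by_contra hcpos
        push_neg at hcpos
        have hK0 : 0 < K := by
          rcases lt_or_eq_of_le hKnn with h' | h'
          · exact h'
          · exact absurd (hKc h'.symm) (by linarith)
        set t := min γs (c / K) with htdef
        have ht0 : 0 < t := lt_min h (div_pos hcpos hK0)
        have htK : t * K ≤ c := by
          have : t ≤ c / K := min_le_right _ _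
          calc t * K ≤ (c / K) * K := by nlinarith
            _ = c := by field_simp
        have := hq (-t) (by have := min_le_left γs (c / K); linarith) (by linarith)
        nlinarith
      nlinarith
  -- inner products with g
  have hgg : ⟪g, g⟫ = ‖g‖ ^ 2 := real_inner_self_eq_norm_sq g
  have hsplit : γs * ⟪g₁, g⟫ + (1 - γs) * ⟪g₂, g⟫ = ‖g‖ ^ 2 := by
    rw [← hgg]
    nth_rewrite 3 [hg]
    rw [inner_add_left, real_inner_smul_left, real_inner_smul_left]
  have hcdiff : ⟪g₁, g⟫ - ⟪g₂, g⟫ = c := by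
    rw [hc, hv, inner_sub_left]
  have h1g : ‖g‖ ^ 2 ≤ ⟪g₁, g⟫ := by nlinarith
  have h2g : ‖g‖ ^ 2 ≤ ⟪g₂, g⟫ := by nlinarith
  have hnds : ‖ds‖ = ‖g‖ := by rw [hds, norm_neg]
  refine ⟨⟨?_, ?_⟩, ?_, ?_⟩
  · rw [hds, hαs, inner_neg_right]; linarith
  · rw [hds, hαs, inner_neg_right]; linarith
  · intro d α hd1 hd2
    have hcomb : ⟪g, d⟫ ≤ α := by
      have : ⟪g, d⟫ = γs * ⟪g₁, d⟫ + (1 - γs) * ⟪g₂, d⟫ := by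
        rw [hg, inner_add_left, real_inner_smul_left, real_inner_smul_left]
      nlinarith
    have hpos : 0 ≤ ‖d + g‖ ^ 2 := sq_nonneg _
    have hexp : ‖d + g‖ ^ 2 = ‖d‖ ^ 2 + 2 * ⟪d, g⟫ + ‖g‖ ^ 2 := norm_add_sq_real d g
    rw [hαs, hnds]
    have hdg : ⟪d, g⟫ = ⟪g, d⟫ := real_inner_comm g d
    linarith
  · rw [hαs, hnds]; ring
end

section
/- (Implicit differentiation underlying the Influence Function, parameter level.) Let E be a real Banach space, θ : ℝ → E a curve of perturbed minimizers differentiable at 0, G : E → E (the gradient field of the training loss) differentiable at θ(0) with derivative H := fderiv G (θ(0)) a continuous linear equivalence of E (invertible Hessian), and v : E → E (the gradient field of the perturbed example's loss) continuous at θ(0). If the first-order stationarity condition G(θ(ε)) + ε·v(θ(ε)) = 0 holds for all ε ∈ ℝ, then the derivative of θ at 0 equals −H⁻¹(v(θ(0))). -/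
open Asymptotics

lemma aux_smul {E : Type*} [NormedAddCommGroup E] [NormedSpace ℝ E]
    (c : ℝ → E) (hc : ContinuousAt c 0) :
    HasDerivAt (fun ε : ℝ => ε • c ε) (c 0) 0 := by
  rw [hasDerivAt_iff_isLittleO]
  have h1 : (fun ε : ℝ => c ε - c 0) =o[nhds 0] (fun _ : ℝ => (1 : ℝ)) := by
    rw [isLittleO_one_iff]
    have := hc.tendsto.sub (tendsto_const_nhds (x := c 0))
    simpa using this
  have h2 : (fun ε : ℝ => ε) =O[nhds 0] (fun ε : ℝ => ε) := isBigO_refl _ _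
  have := h2.smul_isLittleO h1
  simp only [smul_eq_mul, mul_one] at this
  calc (fun ε : ℝ => ε • c ε - (0 : ℝ) • c 0 - (ε - 0) • c 0)
      = fun ε : ℝ => ε • (c ε - c 0) := by
        funext ε; simp [smul_sub]
    _ =o[nhds 0] fun ε : ℝ => ε := this
    _ = fun ε : ℝ => ε - 0 := by funext ε; ring

/-- Implicit differentiation underlying the Influence Function (parameter level):
if `G(θ ε) + ε • v(θ ε) = 0` for all `ε`, with `H = fderiv ℝ G (θ 0)` an invertible
continuous linear map and `v` continuous at `θ 0`, then `deriv θ 0 = -H⁻¹ (v (θ 0))`. -/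
theorem stmt_12 {E : Type*} [NormedAddCommGroup E] [NormedSpace ℝ E] [CompleteSpace E]
    (θ : ℝ → E) (G v : E → E) (H : E ≃L[ℝ] E)
    (hθ : DifferentiableAt ℝ θ 0)
    (hG : DifferentiableAt ℝ G (θ 0))
    (hH : fderiv ℝ G (θ 0) = (H : E →L[ℝ] E))
    (hv : ContinuousAt v (θ 0))
    (hstat : ∀ ε : ℝ, G (θ ε) + ε • v (θ ε) = 0) :
    deriv θ 0 = -H.symm (v (θ 0)) := by
  have hGθ : HasDerivAt (fun ε => G (θ ε)) (H (deriv θ 0)) 0 := by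
    have := (hG.hasFDerivAt.comp_hasDerivAt 0 hθ.hasDerivAt)
    rwa [hH] at this
  have hvθ : HasDerivAt (fun ε : ℝ => ε • v (θ ε)) (v (θ 0)) 0 :=
    aux_smul (fun ε => v (θ ε)) (hv.comp hθ.continuousAt)
  have hsum : HasDerivAt (fun ε : ℝ => G (θ ε) + ε • v (θ ε))
      (H (deriv θ 0) + v (θ 0)) 0 := hGθ.add hvθ
  have hzero : HasDerivAt (fun _ : ℝ => (0 : E)) (0 : E) 0 := hasDerivAt_const _ _
  have heq : (fun ε : ℝ => G (θ ε) + ε • v (θ ε)) = fun _ => (0 : E) := funext hstat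
  rw [heq] at hsum
  have : H (deriv θ 0) + v (θ 0) = 0 := hsum.unique hzero
  have h2 : H (deriv θ 0) = -(v (θ 0)) := by exact eq_neg_of_add_eq_zero_left this
  have := congrArg H.symm h2
  simpa using this
end

section
/- (Influence Function on a test loss, Eq. 6 of the paper, scalar-perturbation case.) Let E be a real Banach space, θ : ℝ → E differentiable at 0, G : E → E differentiable at θ(0) with derivative H := fderiv G (θ(0)) a continuous linear equivalence of E, v : E → E continuous at θ(0), and suppose G(θ(ε)) + ε·v(θ(ε)) = 0 for all ε ∈ ℝ. Let ℓ : E → ℝ (the test loss) be differentiable at θ(0). Then the derivative at ε = 0 of the composite ε ↦ ℓ(θ(ε)) equals −(fderiv ℓ (θ(0)))(H⁻¹(v(θ(0)))); i.e., the example influence on the test loss is I = −∇_θ ℓ(D^tst, θ̂) H⁻¹ ∇_θ ℓ(x^trn, θ̂). -/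
lemma smul_cont_hasDerivAt {E : Type*} [NormedAddCommGroup E] [NormedSpace ℝ E]
    (w : ℝ → E) (hw : ContinuousAt w 0) :
    HasDerivAt (fun ε : ℝ => ε • w ε) (w 0) 0 := by
  rw [hasDerivAt_iff_isLittleO]
  simp only [zero_smul, sub_zero]
  rw [Asymptotics.isLittleO_iff]
  intro c hc
  have : ∀ᶠ ε : ℝ in nhds 0, ‖w ε - w 0‖ ≤ c := by
    have h2 : Filter.Tendsto (fun ε => ‖w ε - w 0‖) (nhds 0) (nhds 0) := by
      have := (hw.tendsto.sub (tendsto_const_nhds : Filter.Tendsto (fun _ : ℝ => w 0) (nhds 0) (nhds (w 0)))).norm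
      simpa using this
    exact (h2.eventually_le_const hc).mono fun x hx => hx
  filter_upwards [this] with ε hε
  have : ε • w ε - ε • w 0 = ε • (w ε - w 0) := by rw [smul_sub]
  rw [this, norm_smul, Real.norm_eq_abs]
  calc |ε| * ‖w ε - w 0‖ ≤ |ε| * c := by
        exact mul_le_mul_of_nonneg_left hε (abs_nonneg ε)
    _ = c * ‖ε‖ := by rw [Real.norm_eq_abs, mul_comm]

/-- Influence Function on a test loss (Eq. 6, scalar-perturbation case): under the
implicit stationarity condition `G(θ ε) + ε • v(θ ε) = 0`, the derivative of the test
loss along the perturbed minimizers is `-(∇ℓ(θ 0)) (H⁻¹ (v (θ 0)))`. -/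
theorem stmt_13 {E : Type*} [NormedAddCommGroup E] [NormedSpace ℝ E] [CompleteSpace E]
    (θ : ℝ → E) (G v : E → E) (H : E ≃L[ℝ] E)
    (hθ : DifferentiableAt ℝ θ 0)
    (hG : DifferentiableAt ℝ G (θ 0))
    (hH : fderiv ℝ G (θ 0) = (H : E →L[ℝ] E))
    (hv : ContinuousAt v (θ 0))
    (hstat : ∀ ε : ℝ, G (θ ε) + ε • v (θ ε) = 0)
    (ℓ : E → ℝ) (hℓ : DifferentiableAt ℝ ℓ (θ 0)) :
    deriv (fun ε : ℝ => ℓ (θ ε)) 0 = -(fderiv ℝ ℓ (θ 0)) (H.symm (v (θ 0))) := by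
  set d := deriv θ 0 with hd
  have hθ' : HasDerivAt θ d 0 := hθ.hasDerivAt
  have hGθ : HasDerivAt (fun ε => G (θ ε)) (H d) 0 := by
    have := hG.hasFDerivAt.comp_hasDerivAt 0 hθ'
    rwa [hH] at this
  have hw : ContinuousAt (fun ε => v (θ ε)) 0 := hv.comp hθ.continuousAt
  have hsm : HasDerivAt (fun ε : ℝ => ε • v (θ ε)) (v (θ 0)) 0 :=
    smul_cont_hasDerivAt (fun ε => v (θ ε)) hw
  have hGθ2 : HasDerivAt (fun ε => G (θ ε)) (-(v (θ 0))) 0 := by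
    have : (fun ε => G (θ ε)) = fun ε : ℝ => -(ε • v (θ ε)) := by
      funext ε; exact eq_neg_of_add_eq_zero_left (hstat ε)
    rw [this]
    exact hsm.neg
  have hHd : H d = -(v (θ 0)) := hGθ.unique hGθ2
  have hdval : d = -(H.symm (v (θ 0))) := by
    have := congrArg H.symm hHd
    simpa using this
  have hcomp : HasDerivAt (fun ε => ℓ (θ ε)) ((fderiv ℝ ℓ (θ 0)) d) 0 :=
    hℓ.hasFDerivAt.comp_hasDerivAt 0 hθ'
  rw [hcomp.deriv, hdval, map_neg]
end
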